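/- Let p < q < r be primes satisfying p > 3, q ≡ 2 (mod p), r ≡ (p-1)/2 (mod p) and r ≡ (q-1)/2 (mod q). Then for k = (p-1)(qr+1)/2 one has a_{pqr}(k) = (p+1)/2. -/

import Mathlib

open Polynomial

/-- `cyclCoeff n k` is the coefficient of `x^k` in the `n`-th cyclotomic polynomial over `ℤ`. -/
noncomputable def cyclCoeff (n k : ℕ) : ℤ := (Polynomial.cyclotomic n ℤ).coeff k


noncomputable def Dser (m : ℕ) : PowerSeries ℤ :=
  PowerSeries.mk fun n => if m ∣ n then 1 else 0

lemma Dser_unit (m : ℕ) (hm : 0 < m) :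
    ((1 : PowerSeries ℤ) - PowerSeries.X ^ m) * Dser m = 1 := by
  ext n
  rw [sub_mul, one_mul, ← mul_comm (Dser m)]
  rw [map_sub, PowerSeries.coeff_mul_X_pow']
  simp only [Dser, PowerSeries.coeff_mk, PowerSeries.coeff_one]
  by_cases h0 : n = 0
  · subst h0
    rw [if_pos (dvd_zero m), if_neg (by omega : ¬ m ≤ 0), if_pos rfl, sub_zero]
  · rw [if_neg h0]
    by_cases hmn : m ≤ n
    · rw [if_pos hmn]
      have hiff : m ∣ n ↔ m ∣ n - m := by
        constructor
        · intro h; exact Nat.dvd_sub h dvd_rfl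
        · intro h; have := Nat.dvd_add h (dvd_refl m); rwa [Nat.sub_add_cancel hmn] at this
      by_cases h : m ∣ n
      · rw [if_pos h, if_pos (hiff.mp h)]; ring
      · rw [if_neg h, if_neg (fun hh => h (hiff.mpr hh))]; ring
    · rw [if_neg hmn, sub_zero,
        if_neg (fun h => hmn (Nat.le_of_dvd (Nat.pos_of_ne_zero h0) h))]

lemma coeff_Dser_mul (m B y : ℕ) (hB : y < m * B) (f : PowerSeries ℤ) :
    PowerSeries.coeff (R := ℤ) y (Dser m * f) =
      ∑ b ∈ Finset.range B, if m * b ≤ y then PowerSeries.coeff (R := ℤ) (y - m * b) f else 0 := by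
  have hm : 0 < m := by
    rcases Nat.eq_zero_or_pos m with rfl | h
    · simp at hB
    · exact h
  rw [PowerSeries.coeff_mul, Finset.Nat.sum_antidiagonal_eq_sum_range_succ_mk]
  simp only [Dser, PowerSeries.coeff_mk, ite_mul, one_mul, zero_mul]
  rw [← Finset.sum_filter, ← Finset.sum_filter]
  refine Finset.sum_nbij' (fun i => i / m) (fun b => m * b) ?_ ?_ ?_ ?_ ?_
  · intro i hi
    simp only [Finset.mem_filter, Finset.mem_range] at hi ⊢
    obtain ⟨hi1, hi2⟩ := hi
    have hmi : m * (i / m) = i := Nat.mul_div_cancel' hi2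
    constructor
    · by_contra hcon
      push_neg at hcon
      have : m * B ≤ m * (i / m) := Nat.mul_le_mul_left m hcon
      omega
    · omega
  · intro b hb
    simp only [Finset.mem_filter, Finset.mem_range] at hb ⊢
    exact ⟨by omega, Dvd.intro b rfl⟩
  · intro i hi
    simp only [Finset.mem_filter, Finset.mem_range] at hi
    exact Nat.mul_div_cancel' hi.2
  · intro b _
    exact Nat.mul_div_cancel_left b hm
  · intro i hi
    simp only [Finset.mem_filter, Finset.mem_range] at hi
    rw [Nat.mul_div_cancel' hi.2]

lemma cyclo1_identity (p : ℕ) (hp : p.Prime) :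
    cyclotomic p ℤ * (X - 1) = X^p - 1 := by
  have h := Polynomial.cyclotomic_expand_eq_cyclotomic_mul hp
    (by simp [Nat.dvd_one]; exact hp.one_lt.ne' : ¬ p ∣ 1) ℤ
  rw [cyclotomic_one] at h
  have h2 : (expand ℤ p) (X - 1) = X^p - 1 := by rw [map_sub, expand_X, map_one]
  rw [h2, one_mul] at h
  rw [← h]

lemma expand_pow_sub_one (a b : ℕ) : (expand ℤ b) ((X:ℤ[X])^a - 1) = X^(a*b) - 1 := by
  rw [map_sub, map_one, map_pow, expand_X, ← pow_mul, mul_comm]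

lemma cyclo2_identity (p q : ℕ) (hp : p.Prime) (hq : q.Prime) (hne : p ≠ q) :
    cyclotomic (p*q) ℤ * ((X^p - 1) * (X^q - 1)) = (X^(p*q) - 1) * (X - 1) := by
  have hqp : ¬ q ∣ p := by
    rw [Nat.Prime.dvd_iff_eq hp hq.one_lt.ne']
    exact fun h => hne h
  have h := Polynomial.cyclotomic_expand_eq_cyclotomic_mul hq hqp ℤ
  have h1 := cyclo1_identity p hp
  calc cyclotomic (p*q) ℤ * ((X^p - 1) * (X^q - 1))
      = (cyclotomic (p*q) ℤ * cyclotomic p ℤ) * ((X - 1) * (X^q - 1)) := by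
        rw [← h1]; ring
    _ = (expand ℤ q) (cyclotomic p ℤ) * ((X^q - 1) * (X - 1)) := by rw [← h]; ring
    _ = ((expand ℤ q) (cyclotomic p ℤ) * (expand ℤ q) (X - 1)) * (X - 1) := by
        rw [map_sub, expand_X, map_one]; ring
    _ = (expand ℤ q) (cyclotomic p ℤ * (X - 1)) * (X - 1) := by rw [map_mul]
    _ = (X^(p*q) - 1) * (X - 1) := by rw [h1, expand_pow_sub_one]

lemma cyclo3_identity (p q r : ℕ) (hp : p.Prime) (hq : q.Prime) (hr : r.Prime)
    (hpq : p ≠ q) (hpr : p ≠ r) (hqr : q ≠ r) :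
    cyclotomic (p*q*r) ℤ * ((X^(p*q) - 1) * (X^(p*r) - 1) * (X^(q*r) - 1) * (X - 1))
      = (X^(p*q*r) - 1) * ((X^p - 1) * (X^q - 1) * (X^r - 1)) := by
  have hrpq : ¬ r ∣ p * q := by
    rw [hr.dvd_mul]
    push_neg
    constructor
    · rw [Nat.Prime.dvd_iff_eq hp hr.one_lt.ne']; exact fun h => hpr h
    · rw [Nat.Prime.dvd_iff_eq hq hr.one_lt.ne']; exact fun h => hqr h
  have h := Polynomial.cyclotomic_expand_eq_cyclotomic_mul hr hrpq ℤ
  have h2 := cyclo2_identity p q hp hq hpq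
  have h2r := congrArg (expand ℤ r) h2
  rw [map_mul, map_mul, map_mul, expand_pow_sub_one, expand_pow_sub_one,
    expand_pow_sub_one, map_sub, expand_X, map_one] at h2r
  calc cyclotomic (p*q*r) ℤ * ((X^(p*q) - 1) * (X^(p*r) - 1) * (X^(q*r) - 1) * (X - 1))
      = (cyclotomic (p*q*r) ℤ * cyclotomic (p*q) ℤ) * ((X^p-1) * (X^q-1))
          * ((X^(p*r) - 1) * (X^(q*r) - 1)) := by
        linear_combination (-(cyclotomic (p*q*r) ℤ * ((X^(p*r) - 1) * (X^(q*r) - 1)))) * h2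
    _ = (expand ℤ r) (cyclotomic (p*q) ℤ) * ((X^p-1) * (X^q-1))
          * ((X^(p*r) - 1) * (X^(q*r) - 1)) := by rw [← h]
    _ = ((expand ℤ r) (cyclotomic (p*q) ℤ) * ((X^(p*r) - 1) * (X^(q*r) - 1)))
          * ((X^p-1) * (X^q-1)) := by ring
    _ = ((X^(p*q*r) - 1) * (X^r - 1)) * ((X^p-1) * (X^q-1)) := by rw [h2r]
    _ = (X^(p*q*r) - 1) * ((X^p - 1) * (X^q - 1) * (X^r - 1)) := by ring
lemma phi_series (p q r : ℕ) (hp : p.Prime) (hq : q.Prime) (hr : r.Prime)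
    (hpq : p ≠ q) (hpr : p ≠ r) (hqr : q ≠ r) :
    (cyclotomic (p*q*r) ℤ : PowerSeries ℤ)
      = (1 - PowerSeries.X^(p*q*r)) *
        ((1 - PowerSeries.X^p) * ((1 - PowerSeries.X^q) * ((1 - PowerSeries.X^r) *
        (Dser (q*r) * (Dser (p*r) * (Dser (p*q) * Dser 1)))))) := by
  have hid := cyclo3_identity p q r hp hq hr hpq hpr hqr
  have hc := congrArg (fun f : ℤ[X] => (f : PowerSeries ℤ)) hid
  simp only [Polynomial.coe_mul, Polynomial.coe_sub, Polynomial.coe_pow, Polynomial.coe_X,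
    Polynomial.coe_one] at hc
  have u1 : ((1 : PowerSeries ℤ) - PowerSeries.X^(p*q)) * Dser (p*q) = 1 :=
    Dser_unit _ (Nat.mul_pos hp.pos hq.pos)
  have u2 : ((1 : PowerSeries ℤ) - PowerSeries.X^(p*r)) * Dser (p*r) = 1 :=
    Dser_unit _ (Nat.mul_pos hp.pos hr.pos)
  have u3 : ((1 : PowerSeries ℤ) - PowerSeries.X^(q*r)) * Dser (q*r) = 1 :=
    Dser_unit _ (Nat.mul_pos hq.pos hr.pos)
  have u4 : ((1 : PowerSeries ℤ) - PowerSeries.X^1) * Dser 1 = 1 :=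
    Dser_unit _ one_pos
  calc (cyclotomic (p*q*r) ℤ : PowerSeries ℤ)
      = (cyclotomic (p*q*r) ℤ : PowerSeries ℤ) *
          ((((1 : PowerSeries ℤ) - PowerSeries.X^(p*q)) * Dser (p*q)) *
           ((((1 : PowerSeries ℤ) - PowerSeries.X^(p*r)) * Dser (p*r)) *
            ((((1 : PowerSeries ℤ) - PowerSeries.X^(q*r)) * Dser (q*r)) *
             (((1 : PowerSeries ℤ) - PowerSeries.X^1) * Dser 1)))) := by
        rw [u1, u2, u3, u4]; ring
    _ = ((cyclotomic (p*q*r) ℤ : PowerSeries ℤ) *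
          ((PowerSeries.X^(p*q) - 1) * (PowerSeries.X^(p*r) - 1) * (PowerSeries.X^(q*r) - 1)
            * (PowerSeries.X - 1))) *
          (Dser (q*r) * (Dser (p*r) * (Dser (p*q) * Dser 1))) := by ring
    _ = ((PowerSeries.X^(p*q*r) - 1) *
          ((PowerSeries.X^p - 1) * (PowerSeries.X^q - 1) * (PowerSeries.X^r - 1))) *
          (Dser (q*r) * (Dser (p*r) * (Dser (p*q) * Dser 1))) := by rw [hc]
    _ = _ := by ring

def Tsum (p q r m : ℕ) : ℤ :=
  ∑ c ∈ Finset.range p, ∑ b ∈ Finset.range q, ∑ a ∈ Finset.range r,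
    if q*r*c + p*r*b + p*q*a ≤ m then (1:ℤ) else 0

lemma coeff_E (p q r m : ℕ) (h : m < p*q*r) :
    PowerSeries.coeff (R := ℤ) m (Dser (q*r) * (Dser (p*r) * (Dser (p*q) * Dser 1))) = Tsum p q r m := by
  have e1 : (q*r)*p = p*q*r := by ring
  have e2 : (p*r)*q = p*q*r := by ring
  have e3 : (p*q)*r = p*q*r := by ring
  rw [coeff_Dser_mul (q*r) p m (by linarith), Tsum]
  refine Finset.sum_congr rfl (fun c hc => ?_)
  by_cases h1 : q*r*c ≤ m
  · rw [if_pos h1, coeff_Dser_mul (p*r) q _ (by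
      have : m - q*r*c ≤ m := Nat.sub_le _ _
      linarith)]
    refine Finset.sum_congr rfl (fun b hb => ?_)
    by_cases h2 : p*r*b ≤ m - q*r*c
    · rw [if_pos h2, coeff_Dser_mul (p*q) r _ (by
        have : m - q*r*c - p*r*b ≤ m := le_trans (Nat.sub_le _ _) (Nat.sub_le _ _)
        linarith)]
      refine Finset.sum_congr rfl (fun a ha => ?_)
      have hD1 : ∀ n : ℕ, PowerSeries.coeff (R := ℤ) n (Dser 1) = 1 := by
        intro n; simp [Dser]
      by_cases h3 : p*q*a ≤ m - q*r*c - p*r*b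
      · rw [if_pos h3, hD1, if_pos (by
          set x := q*r*c; set y := p*r*b; set z := p*q*a; omega)]
      · rw [if_neg h3, if_neg (by
          set x := q*r*c; set y := p*r*b; set z := p*q*a; omega)]
    · rw [if_neg h2]
      symm
      refine Finset.sum_eq_zero (fun a ha => ?_)
      rw [if_neg (by set x := q*r*c; set y := p*r*b; set z := p*q*a; omega)]
  · rw [if_neg h1]
    symm
    refine Finset.sum_eq_zero (fun b hb => ?_)
    refine Finset.sum_eq_zero (fun a ha => ?_)
    rw [if_neg (by set x := q*r*c; set y := p*r*b; set z := p*q*a; omega)]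

lemma coeff_one_sub_pow_mul (e n : ℕ) (f : PowerSeries ℤ) :
    PowerSeries.coeff (R := ℤ) n ((1 - PowerSeries.X^e) * f)
      = PowerSeries.coeff (R := ℤ) n f - (if e ≤ n then PowerSeries.coeff (R := ℤ) (n - e) f else 0) := by
  rw [sub_mul, one_mul, map_sub, mul_comm (PowerSeries.X^e) f, PowerSeries.coeff_mul_X_pow']

lemma cyclCoeff_decomp (p q r k : ℕ) (hp : p.Prime) (hq : q.Prime) (hr : r.Prime)
    (hpq : p ≠ q) (hpr : p ≠ r) (hqr : q ≠ r)
    (hk1 : k < p*q*r) (hk2 : p + q + r ≤ k) :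
    (cyclotomic (p*q*r) ℤ).coeff k =
      ((Tsum p q r k - Tsum p q r (k - r)) - (Tsum p q r (k - q) - Tsum p q r (k - q - r)))
      - ((Tsum p q r (k - p) - Tsum p q r (k - p - r))
          - (Tsum p q r (k - p - q) - Tsum p q r (k - p - q - r))) := by
  have hE : ∀ m, m ≤ k →
      PowerSeries.coeff (R := ℤ) m (Dser (q*r) * (Dser (p*r) * (Dser (p*q) * Dser 1)))
        = Tsum p q r m := fun m hm => coeff_E p q r m (by linarith)
  set E := Dser (q*r) * (Dser (p*r) * (Dser (p*q) * Dser 1)) with hEdef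
  have hc2 : ∀ m, r ≤ m → m ≤ k →
      PowerSeries.coeff (R := ℤ) m ((1 - PowerSeries.X^r) * E) = Tsum p q r m - Tsum p q r (m - r) := by
    intro m h1 h2
    rw [coeff_one_sub_pow_mul, if_pos h1, hE m h2, hE (m - r) (by omega)]
  have hc1 : ∀ m, q + r ≤ m → m ≤ k →
      PowerSeries.coeff (R := ℤ) m ((1 - PowerSeries.X^q) * ((1 - PowerSeries.X^r) * E))
        = (Tsum p q r m - Tsum p q r (m - r)) - (Tsum p q r (m - q) - Tsum p q r (m - q - r)) := by
    intro m h1 h2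
    rw [coeff_one_sub_pow_mul, if_pos (by omega : q ≤ m), hc2 m (by omega) h2,
      hc2 (m - q) (by omega) (by omega)]
  have hc0 : ∀ m, p + q + r ≤ m → m ≤ k →
      PowerSeries.coeff (R := ℤ) m ((1 - PowerSeries.X^p) *
          ((1 - PowerSeries.X^q) * ((1 - PowerSeries.X^r) * E)))
        = ((Tsum p q r m - Tsum p q r (m - r)) - (Tsum p q r (m - q) - Tsum p q r (m - q - r)))
          - ((Tsum p q r (m - p) - Tsum p q r (m - p - r))
              - (Tsum p q r (m - p - q) - Tsum p q r (m - p - q - r))) := by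
    intro m h1 h2
    rw [coeff_one_sub_pow_mul, if_pos (by omega : p ≤ m), hc1 m (by omega) h2,
      hc1 (m - p) (by omega) (by omega)]
  rw [← Polynomial.coeff_coe, phi_series p q r hp hq hr hpq hpr hqr, ← hEdef,
    coeff_one_sub_pow_mul, if_neg (not_le.mpr hk1), sub_zero, hc0 k hk2 le_rfl]

lemma small_mul_zero (q e : ℤ) (hq : 0 < q) (h1 : -q < q*e) (h2 : q*e < q) : e = 0 := by
  rcases lt_trichotomy e 0 with h | h | h
  · exfalso
    have : q*e ≤ q*(-1) := mul_le_mul_of_nonneg_left (by omega) (by linarith)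
    linarith
  · exact h
  · exfalso
    have : q*1 ≤ q*e := mul_le_mul_of_nonneg_left (by omega) (by linarith)
    linarith

lemma window_pm (p D x : ℤ) (hp : 0 < p) (h1 : p*D ≤ x) (h2 : x - p < p*D)
    (hxlo : -p ≤ x) (hxhi : x < p) : D = 0 ∨ D = -1 := by
  rcases lt_trichotomy D (-1) with h | h | h
  · exfalso
    have : p*D ≤ p*(-2) := mul_le_mul_of_nonneg_left (by omega) (by linarith)
    linarith
  · right; exact h
  · left
    by_contra hne
    have hD1 : 1 ≤ D := by omega
    have : p*1 ≤ p*D := mul_le_mul_of_nonneg_left (by omega) (by linarith)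
    linarith

section Claims

variable (p q r p' u s t k a b c : ℤ)

lemma claimA
    (hp' : p = 2*p'+1) (hp'2 : 2 ≤ p') (hu : q = p*u+2) (hu1 : 1 ≤ u)
    (hs : 2*r+1 = s*p*q) (hs1 : 1 ≤ s) (ht : t = u*r+s*q) (hk : k = p*p'*t)
    (hpq : p < q) (hqr : q < r) (hcop : IsCoprime (q:ℤ) (r:ℤ))
    (ha0 : 0 ≤ a) (har : a < r) (hb0 : 0 ≤ b) (hbq : b < q) (hc0 : 0 ≤ c) (hcp : c < p)
    (hw2 : a*(p*q) + b*(p*r) + c*(q*r) ≤ k)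
    (hw1 : k < a*(p*q) + b*(p*r) + c*(q*r) + p) :
    c ≤ p' ∧ a = (p' - c)*s ∧ b = (p' - c)*u := by
  have hp5 : (5:ℤ) ≤ p := by omega
  have hpt : p*t = q*r + 1 := by linear_combination (-r) * hu - hs + p * ht
  have hveq : a*(p*q) + b*(p*r) + c*(q*r) = p*(a*q+b*r+c*t) - c := by
    linear_combination (-c) * hpt
  have epd : p*(a*q+b*r+c*t - p'*t) = a*(p*q)+b*(p*r)+c*(q*r) + c - k := by
    linear_combination hk - hveq
  have h1 : p*(a*q+b*r+c*t - p'*t) ≤ c := by rw [epd]; linarith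
  have h2 : c - p < p*(a*q+b*r+c*t - p'*t) := by rw [epd]; linarith
  have hD := window_pm p _ c (by linarith) h1 h2 (by linarith) hcp
  have hD0 : a*q+b*r+c*t - p'*t = 0 := by
    rcases hD with h | h
    · exact h
    · exfalso; rw [h] at h2; linarith
  have hpu : p*1 ≤ p*u := mul_le_mul_of_nonneg_left hu1 (by linarith)
  have hq7 : (7:ℤ) ≤ q := by linarith
  have h1r : 1*r ≤ u*r := mul_le_mul_of_nonneg_right hu1 (by linarith)
  have h1q : 1*q ≤ s*q := mul_le_mul_of_nonneg_right hs1 (by linarith)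
  have htqr : q + r ≤ t := by rw [ht]; linarith
  have hab4 : 0 ≤ a*q + b*r :=
    add_nonneg (mul_nonneg ha0 (by linarith)) (mul_nonneg hb0 (by linarith))
  have hcle : c ≤ p' := by
    by_contra hcon
    push_neg at hcon
    have h3 : (p'+1)*t ≤ c*t := mul_le_mul_of_nonneg_right (by linarith) (by linarith)
    linarith
  have hj0 : 0 ≤ p' - c := by linarith
  have hab : a*q + b*r = (p'-c)*t := by linear_combination hD0
  have hqq : q*(a - (p'-c)*s) = r*((p'-c)*u - b) := by
    linear_combination hab + (p'-c)*ht
  have hrd : (r:ℤ) ∣ q * (a - (p'-c)*s) := ⟨(p'-c)*u - b, hqq⟩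
  have hrd2 : (r:ℤ) ∣ (a - (p'-c)*s) := (hcop.symm).dvd_of_dvd_mul_left hrd
  have hpq7 : p*7 ≤ p*q := mul_le_mul_of_nonneg_left hq7 (by linarith)
  have h2' : 1*(p*q - 2*p') ≤ s*(p*q - 2*p') :=
    mul_le_mul_of_nonneg_right hs1 (by linarith)
  have hps : p'*s < r := by linarith
  have hjs : (p'-c)*s ≤ p'*s := mul_le_mul_of_nonneg_right (by linarith) (by linarith)
  have hjs0 : 0 ≤ (p'-c)*s := mul_nonneg hj0 (by linarith)
  obtain ⟨e, he⟩ := hrd2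
  have he0 : e = 0 := small_mul_zero r e (by linarith) (by linarith) (by linarith)
  have ha : a = (p'-c)*s := by rw [he0, mul_zero] at he; linarith
  have hbb : b = (p'-c)*u := by
    have h0 : r*((p'-c)*u - b) = 0 := by rw [← hqq, ha]; ring
    rcases mul_eq_zero.mp h0 with h | h
    · exfalso; linarith
    · linarith
  exact ⟨hcle, ha, hbb⟩

end Claims

section CBD
variable (p q r p' u s t k a b c v' : ℤ)

-- shared hypotheses bundle written out in each lemma
lemma claimB
    (hp' : p = 2*p'+1) (hp'2 : 2 ≤ p') (hu : q = p*u+2) (hu1 : 1 ≤ u)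
    (hs : 2*r+1 = s*p*q) (hs1 : 1 ≤ s) (ht : t = u*r+s*q) (hk : k = p*p'*t)
    (hpq : p < q) (hqr : q < r)
    (ha0 : 0 ≤ a) (har : a < r) (hb0 : 0 ≤ b) (hbq : b < q) (hc0 : 0 ≤ c) (hcp : c < p)
    (hw1 : a*(p*q) + b*(p*r) + c*(q*r) + q ≤ k)
    (hw2 : k < a*(p*q) + b*(p*r) + c*(q*r) + q + p) : False := by
  have hp5 : (5:ℤ) ≤ p := by omega
  have hpt : p*t = q*r + 1 := by linear_combination (-r) * hu - hs + p * ht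
  have hveq : a*(p*q) + b*(p*r) + c*(q*r) = p*(a*q+b*r+c*t) - c := by
    linear_combination (-c) * hpt
  have hpu : p*1 ≤ p*u := mul_le_mul_of_nonneg_left hu1 (by linarith)
  have hq7 : (7:ℤ) ≤ q := by linarith
  have h1r : 1*r ≤ u*r := mul_le_mul_of_nonneg_right hu1 (by linarith)
  have h1q : 1*q ≤ s*q := mul_le_mul_of_nonneg_right hs1 (by linarith)
  have htqr : q + r ≤ t := by rw [ht]; linarith
  have hab4 : 0 ≤ a*q + b*r :=
    add_nonneg (mul_nonneg ha0 (by linarith)) (mul_nonneg hb0 (by linarith))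
  have hp'u : p*u = 2*(p'*u) + u := by linear_combination u*hp'
  have hm1 : 1*1 ≤ (p'-1)*u := mul_le_mul (by linarith) hu1 (by norm_num) (by linarith)
  have hmaster : (p'+2)*u + 2 ≤ q - 1 := by linarith
  have hup : u*p = q - 2 := by linear_combination -hu
  have epd : p*(a*q+b*r+c*t - p'*t + u)
      = a*(p*q)+b*(p*r)+c*(q*r) + q + c - k - 2 := by
    linear_combination hk - hveq - hu
  have h1 : p*(a*q+b*r+c*t - p'*t + u) ≤ c - 2 := by rw [epd]; linarith
  have h2 : (c - 2) - p < p*(a*q+b*r+c*t - p'*t + u) := by rw [epd]; linarith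
  have hD := window_pm p _ (c-2) (by linarith) h1 h2 (by linarith) (by linarith)
  rcases hD with h | h
  · -- D = 0 : c ≥ 2, A = p't - u
    have hc2 : 2 ≤ c := by rw [h] at h1; linarith
    have hab : a*q + b*r = (p'-c)*t - u := by linear_combination h
    have hcle : c ≤ p' := by
      by_contra hcon
      push_neg at hcon
      have h3 : (p'+1)*t ≤ c*t := mul_le_mul_of_nonneg_right (by linarith) (by linarith)
      have heq2 : a*q + b*r = p'*t - c*t - u := by linear_combination h
      linarith
    have key : b - ((p'-c)+2)*u
        = q*(2*a + b*s*p - (p'-c)*u*s*p - 2*((p'-c)*s)) := by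
      linear_combination (-2)*hab + (b - (p'-c)*u)*hs - 2*(p'-c)*ht
    have hBlo : 0 ≤ ((p'-c)+2)*u := mul_nonneg (by linarith) (by linarith)
    have hBhi : ((p'-c)+2)*u ≤ (p'+2)*u := mul_le_mul_of_nonneg_right (by linarith) (by linarith)
    have hz0 : (2*a + b*s*p - (p'-c)*u*s*p - 2*((p'-c)*s)) = 0 := by
      refine small_mul_zero q _ (by linarith) ?_ ?_ <;> rw [← key] <;> linarith
    have hbEq : b = ((p'-c)+2)*u := by
      rw [hz0, mul_zero] at key; linarith
    have haq : a*q = q*(s*((p'-c) - u*p)) := by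
      linear_combination hab + (p'-c)*ht - r*hbEq - u*hs
    have ha' : a = s*((p'-c) - u*p) := by
      have h0 : q*(a - s*((p'-c) - u*p)) = 0 := by linear_combination haq
      rcases mul_eq_zero.mp h0 with hh | hh
      · exfalso; linarith
      · linarith
    have hneg : (p'-c) - u*p ≤ -1 := by linarith
    have : s*((p'-c) - u*p) ≤ s*(-1) := mul_le_mul_of_nonneg_left hneg (by linarith)
    linarith
  · -- D = -1 : c ≤ 1, A = p't - u - 1
    have hc1 : c ≤ 1 := by rw [h] at h2; linarith
    have hab : a*q + b*r = (p'-c)*t - u - 1 := by linear_combination h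
    have key : b - (((p'-c)+2)*u + 2)
        = q*(2*a + b*s*p - (p'-c)*u*s*p - 2*((p'-c)*s)) := by
      linear_combination (-2)*hab + (b - (p'-c)*u)*hs - 2*(p'-c)*ht
    have hBlo : 0 ≤ ((p'-c)+2)*u := mul_nonneg (by linarith) (by linarith)
    have hBhi : ((p'-c)+2)*u ≤ (p'+2)*u := mul_le_mul_of_nonneg_right (by linarith) (by linarith)
    have hz0 : (2*a + b*s*p - (p'-c)*u*s*p - 2*((p'-c)*s)) = 0 := by
      refine small_mul_zero q _ (by linarith) ?_ ?_ <;> rw [← key] <;> linarith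
    have hbEq : b = ((p'-c)+2)*u + 2 := by
      rw [hz0, mul_zero] at key; linarith
    have haq : a*q = q*(s*((p'-c) - u*p - p)) := by
      linear_combination hab + (p'-c)*ht - r*hbEq - (u+1)*hs
    have ha' : a = s*((p'-c) - u*p - p) := by
      have h0 : q*(a - s*((p'-c) - u*p - p)) = 0 := by linear_combination haq
      rcases mul_eq_zero.mp h0 with hh | hh
      · exfalso; linarith
      · linarith
    have hneg : (p'-c) - u*p - p ≤ -1 := by linarith
    have : s*((p'-c) - u*p - p) ≤ s*(-1) := mul_le_mul_of_nonneg_left hneg (by linarith)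
    linarith

end CBD

section CCD
variable (p q r p' u s t k a b c v' : ℤ)

lemma claimC
    (hp' : p = 2*p'+1) (hp'2 : 2 ≤ p') (hu : q = p*u+2) (hu1 : 1 ≤ u)
    (hs : 2*r+1 = s*p*q) (hs1 : 1 ≤ s) (ht : t = u*r+s*q) (hk : k = p*p'*t)
    (hv : r = p*v' + p') (hsv : 2*v' + 1 = s*q)
    (hpq : p < q) (hqr : q < r)
    (ha0 : 0 ≤ a) (har : a < r) (hb0 : 0 ≤ b) (hbq : b < q) (hc0 : 0 ≤ c) (hcp : c < p)
    (hw1 : a*(p*q) + b*(p*r) + c*(q*r) + r ≤ k)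
    (hw2 : k < a*(p*q) + b*(p*r) + c*(q*r) + r + p) : False := by
  have hp5 : (5:ℤ) ≤ p := by omega
  have hpt : p*t = q*r + 1 := by linear_combination (-r) * hu - hs + p * ht
  have hveq : a*(p*q) + b*(p*r) + c*(q*r) = p*(a*q+b*r+c*t) - c := by
    linear_combination (-c) * hpt
  have hpu : p*1 ≤ p*u := mul_le_mul_of_nonneg_left hu1 (by linarith)
  have hq7 : (7:ℤ) ≤ q := by linarith
  have h1r : 1*r ≤ u*r := mul_le_mul_of_nonneg_right hu1 (by linarith)
  have h1q : 1*q ≤ s*q := mul_le_mul_of_nonneg_right hs1 (by linarith)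
  have htqr : q + r ≤ t := by rw [ht]; linarith
  have hab4 : 0 ≤ a*q + b*r :=
    add_nonneg (mul_nonneg ha0 (by linarith)) (mul_nonneg hb0 (by linarith))
  have hp'u : p*u = 2*(p'*u) + u := by linear_combination u*hp'
  have hm1 : 1*1 ≤ (p'-1)*u := mul_le_mul (by linarith) hu1 (by norm_num) (by linarith)
  have hmaster : (p'+2)*u + 2 ≤ q - 1 := by linarith
  have hup : u*p = q - 2 := by linear_combination -hu
  have hv'1 : 1 ≤ v' := by
    by_contra hcon
    push_neg at hcon
    have : p*v' ≤ p*0 := mul_le_mul_of_nonneg_left (by linarith) (by linarith)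
    linarith
  have epd : p*(a*q+b*r+c*t - p'*t + v')
      = a*(p*q)+b*(p*r)+c*(q*r) + r + c - k - p' := by
    linear_combination hk - hveq - hv
  have h1 : p*(a*q+b*r+c*t - p'*t + v') ≤ c - p' := by rw [epd]; linarith
  have h2 : (c - p') - p < p*(a*q+b*r+c*t - p'*t + v') := by rw [epd]; linarith
  have hD := window_pm p _ (c-p') (by linarith) h1 h2 (by linarith) (by linarith)
  rcases hD with h | h
  · -- D = 0 : c ≥ p'
    have hcge : p' ≤ c := by rw [h] at h1; linarith
    have heq : a*q + b*r = (p'-c)*t - v' := by linear_combination h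
    have hmul : (p'-c)*t ≤ 0 := mul_nonpos_of_nonpos_of_nonneg (by linarith) (by linarith)
    linarith
  · -- D = -1 : c < p'
    have hclt : c < p' := by rw [h] at h2; linarith
    have hab : a*q + b*r = (p'-c)*t - v' - 1 := by linear_combination h
    have key : b - ((p'-c)*u + 1)
        = q*(2*a + b*s*p - (p'-c)*u*s*p - 2*((p'-c)*s) + s) := by
      linear_combination (-2)*hab + (b - (p'-c)*u)*hs - 2*(p'-c)*ht + hsv
    have hBlo : 0 ≤ (p'-c)*u := mul_nonneg (by linarith) (by linarith)
    have hBhi : (p'-c)*u ≤ (p'+2)*u := mul_le_mul_of_nonneg_right (by linarith) (by linarith)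
    have hz0 : (2*a + b*s*p - (p'-c)*u*s*p - 2*((p'-c)*s) + s) = 0 := by
      refine small_mul_zero q _ (by linarith) ?_ ?_ <;> rw [← key] <;> linarith
    have hbEq : b = (p'-c)*u + 1 := by
      rw [hz0, mul_zero] at key; linarith
    have haq : 2*(a*q) = q*(s*(2*(p'-c) - 1 - p)) := by
      linear_combination 2*hab + ((p'-c)*u - b)*hs + 2*(p'-c)*ht - hsv + (1 - s*p*q)*hbEq
    have ha' : 2*a = s*(2*(p'-c) - 1 - p) := by
      have h0 : q*(2*a - s*(2*(p'-c) - 1 - p)) = 0 := by linear_combination haq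
      rcases mul_eq_zero.mp h0 with hh | hh
      · exfalso; linarith
      · linarith
    have hneg : 2*(p'-c) - 1 - p ≤ -2 := by linarith
    have : s*(2*(p'-c) - 1 - p) ≤ s*(-2) := mul_le_mul_of_nonneg_left hneg (by linarith)
    linarith

lemma claimD
    (hp' : p = 2*p'+1) (hp'2 : 2 ≤ p') (hu : q = p*u+2) (hu1 : 1 ≤ u)
    (hs : 2*r+1 = s*p*q) (hs1 : 1 ≤ s) (ht : t = u*r+s*q) (hk : k = p*p'*t)
    (hv : r = p*v' + p') (hsv : 2*v' + 1 = s*q)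
    (hpq : p < q) (hqr : q < r)
    (ha0 : 0 ≤ a) (har : a < r) (hb0 : 0 ≤ b) (hbq : b < q) (hc0 : 0 ≤ c) (hcp : c < p)
    (hw1 : a*(p*q) + b*(p*r) + c*(q*r) + q + r ≤ k)
    (hw2 : k < a*(p*q) + b*(p*r) + c*(q*r) + q + r + p) : False := by
  have hp5 : (5:ℤ) ≤ p := by omega
  have hpt : p*t = q*r + 1 := by linear_combination (-r) * hu - hs + p * ht
  have hveq : a*(p*q) + b*(p*r) + c*(q*r) = p*(a*q+b*r+c*t) - c := by
    linear_combination (-c) * hpt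
  have hpu : p*1 ≤ p*u := mul_le_mul_of_nonneg_left hu1 (by linarith)
  have hq7 : (7:ℤ) ≤ q := by linarith
  have h1r : 1*r ≤ u*r := mul_le_mul_of_nonneg_right hu1 (by linarith)
  have h1q : 1*q ≤ s*q := mul_le_mul_of_nonneg_right hs1 (by linarith)
  have htqr : q + r ≤ t := by rw [ht]; linarith
  have hab4 : 0 ≤ a*q + b*r :=
    add_nonneg (mul_nonneg ha0 (by linarith)) (mul_nonneg hb0 (by linarith))
  have hp'u : p*u = 2*(p'*u) + u := by linear_combination u*hp'
  have hm1 : 1*1 ≤ (p'-1)*u := mul_le_mul (by linarith) hu1 (by norm_num) (by linarith)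
  have hmaster : (p'+2)*u + 2 ≤ q - 1 := by linarith
  have hup : u*p = q - 2 := by linear_combination -hu
  have hv'1 : 1 ≤ v' := by
    by_contra hcon
    push_neg at hcon
    have : p*v' ≤ p*0 := mul_le_mul_of_nonneg_left (by linarith) (by linarith)
    linarith
  have epd : p*(a*q+b*r+c*t - p'*t + u + v')
      = a*(p*q)+b*(p*r)+c*(q*r) + q + r + c - k - 2 - p' := by
    linear_combination hk - hveq - hu - hv
  have h1 : p*(a*q+b*r+c*t - p'*t + u + v') ≤ c - 2 - p' := by rw [epd]; linarith
  have h2 : (c - 2 - p') - p < p*(a*q+b*r+c*t - p'*t + u + v') := by rw [epd]; linarith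
  have hD := window_pm p _ (c-2-p') (by linarith) h1 h2 (by linarith) (by linarith)
  rcases hD with h | h
  · -- D = 0 : c ≥ p'+2
    have hcge : p' + 2 ≤ c := by rw [h] at h1; linarith
    have heq : a*q + b*r = (p'-c)*t - u - v' := by linear_combination h
    have hmul : (p'-c)*t ≤ (-2)*t := mul_le_mul_of_nonneg_right (by linarith) (by linarith)
    linarith
  · -- D = -1 : c ≤ p'+1
    have hcle : c ≤ p' + 1 := by rw [h] at h2; linarith
    have hab : a*q + b*r = (p'-c)*t - u - v' - 1 := by linear_combination h
    by_cases hcge : p' ≤ c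
    · have hmul : (p'-c)*t ≤ 0 := mul_nonpos_of_nonpos_of_nonneg (by linarith) (by linarith)
      linarith
    · push_neg at hcge
      have key : b - (((p'-c)+2)*u + 1)
          = q*(2*a + b*s*p - (p'-c)*u*s*p - 2*((p'-c)*s) + s) := by
        linear_combination (-2)*hab + (b - (p'-c)*u)*hs - 2*(p'-c)*ht + hsv
      have hBlo : 0 ≤ ((p'-c)+2)*u := mul_nonneg (by linarith) (by linarith)
      have hBhi : ((p'-c)+2)*u ≤ (p'+2)*u :=
        mul_le_mul_of_nonneg_right (by linarith) (by linarith)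
      have hz0 : (2*a + b*s*p - (p'-c)*u*s*p - 2*((p'-c)*s) + s) = 0 := by
        refine small_mul_zero q _ (by linarith) ?_ ?_ <;> rw [← key] <;> linarith
      have hbEq : b = ((p'-c)+2)*u + 1 := by
        rw [hz0, mul_zero] at key; linarith
      have haq : 2*(a*q) = q*(s*(2*(p'-c) - 1 - 2*(u*p) - p)) := by
        linear_combination 2*hab + ((p'-c)*u - b)*hs + 2*(p'-c)*ht - hsv + (1 - s*p*q)*hbEq
      have ha' : 2*a = s*(2*(p'-c) - 1 - 2*(u*p) - p) := by
        have h0 : q*(2*a - s*(2*(p'-c) - 1 - 2*(u*p) - p)) = 0 := by linear_combination haq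
        rcases mul_eq_zero.mp h0 with hh | hh
        · exfalso; linarith
        · linarith
      have hneg : 2*(p'-c) - 1 - 2*(u*p) - p ≤ -2 := by linarith
      have : s*(2*(p'-c) - 1 - 2*(u*p) - p) ≤ s*(-2) := mul_le_mul_of_nonneg_left hneg (by linarith)
      linarith

end CCD

set_option maxHeartbeats 1000000 in
/-- Möller: if `p > 3`, `q ≡ 2 (mod p)`, `r ≡ (p-1)/2 (mod p)`,
`r ≡ (q-1)/2 (mod q)`, then for `k = (p-1)(qr+1)/2` one has `a_{pqr}(k) = (p+1)/2`. -/
theorem stmt5 (p q r : ℕ) (hp : p.Prime) (hq : q.Prime) (hr : r.Prime)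
    (hp3 : 3 < p) (hpq : p < q) (hqr : q < r)
    (hqmod : q ≡ 2 [MOD p]) (hrmodp : r ≡ (p - 1) / 2 [MOD p]) (hrmodq : r ≡ (q - 1) / 2 [MOD q])
    (k : ℕ) (hk : k = (p - 1) * (q * r + 1) / 2) :
    cyclCoeff (p * q * r) k = ((p : ℤ) + 1) / 2 := by
  -- ============ arithmetic setup ============
  have hp4 : p ≠ 4 := by intro h; rw [h] at hp; norm_num at hp
  have hp5 : 5 ≤ p := by omega
  have hpodd : p % 2 = 1 := Nat.odd_iff.mp (hp.odd_of_ne_two (by omega))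
  obtain ⟨p', hp'⟩ : ∃ p', p = 2*p'+1 := ⟨p/2, by omega⟩
  have hp'2 : 2 ≤ p' := by omega
  have hq2 : q % p = 2 := by
    have h : q % p = 2 % p := hqmod
    rwa [Nat.mod_eq_of_lt (show 2 < p by omega)] at h
  have hu : q = p*(q/p) + 2 := by
    conv_lhs => rw [← Nat.div_add_mod q p]
    rw [hq2]
  set u := q / p with hudef
  have hu1 : 1 ≤ u := by
    rcases Nat.eq_zero_or_pos u with h | h
    · rw [h, Nat.mul_zero] at hu; omega
    · exact h
  have hqodd : q % 2 = 1 := Nat.odd_iff.mp (hq.odd_of_ne_two (by omega))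
  have hq7 : 7 ≤ q := by omega
  have hrodd : r % 2 = 1 := Nat.odd_iff.mp (hr.odd_of_ne_two (by omega))
  have hp12 : (p-1)/2 = p' := by omega
  have hrp : r % p = p' := by
    have h : r % p = ((p-1)/2) % p := hrmodp
    rw [hp12] at h
    rwa [Nat.mod_eq_of_lt (show p' < p by omega)] at h
  have hv : r = p*(r/p) + p' := by
    conv_lhs => rw [← Nat.div_add_mod r p]
    rw [hrp]
  set v' := r / p with hvdef
  obtain ⟨q', hq'⟩ : ∃ q', q = 2*q'+1 := ⟨q/2, by omega⟩
  have hq12 : (q-1)/2 = q' := by omega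
  have hrq : r % q = q' := by
    have h : r % q = ((q-1)/2) % q := hrmodq
    rw [hq12] at h
    rwa [Nat.mod_eq_of_lt (show q' < q by omega)] at h
  have hw : r = q*(r/q) + q' := by
    conv_lhs => rw [← Nat.div_add_mod r q]
    rw [hrq]
  set w := r / q with hwdef
  have hdp : 2*r + 1 = p*(2*v' + 1) := by rw [hv, hp']; ring
  have hdq : 2*r + 1 = q*(2*w + 1) := by rw [hw, hq']; ring
  have hcop_pq : Nat.Coprime p q := (Nat.coprime_primes hp hq).mpr (by omega)
  have hdvd : p*q ∣ 2*r + 1 :=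
    Nat.Coprime.mul_dvd_of_dvd_of_dvd hcop_pq ⟨2*v'+1, hdp⟩ ⟨2*w+1, hdq⟩
  obtain ⟨s, hsN⟩ := hdvd
  have hs1 : 1 ≤ s := by
    rcases Nat.eq_zero_or_pos s with h | h
    · rw [h, Nat.mul_zero] at hsN; omega
    · exact h
  have hsv : 2*v' + 1 = q*s := by
    have h0 : p*(2*v'+1) = p*(q*s) := by rw [← hdp, hsN]; ring
    exact Nat.eq_of_mul_eq_mul_left (by omega) h0
  set t := u*r + s*q with htdef
  -- ℤ casts of the relations
  have hpZ : (p:ℤ) = 2*(p':ℤ)+1 := by exact_mod_cast hp'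
  have huZ : (q:ℤ) = (p:ℤ)*(u:ℤ)+2 := by exact_mod_cast hu
  have hsZ : 2*(r:ℤ)+1 = (s:ℤ)*p*q := by
    have h0 := congrArg (Nat.cast : ℕ → ℤ) hsN
    push_cast at h0
    linarith
  have htZ : (t:ℤ) = (u:ℤ)*r + (s:ℤ)*q := by push_cast [htdef]; ring
  have hvZ : (r:ℤ) = (p:ℤ)*v' + p' := by exact_mod_cast hv
  have hsvZ : 2*(v':ℤ) + 1 = (s:ℤ)*q := by
    have h0 := congrArg (Nat.cast : ℕ → ℤ) hsv
    push_cast at h0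
    linarith
  have hptZ : (p:ℤ)*t = (q:ℤ)*r + 1 := by linear_combination (-(r:ℤ))*huZ - hsZ + (p:ℤ)*htZ
  have hptN : p*t = q*r + 1 := by exact_mod_cast hptZ
  have hkN : k = p*p'*t := by
    rw [hk]
    have h1 : p - 1 = 2*p' := by omega
    rw [h1, ← hptN]
    have h2 : 2*p'*(p*t) = 2*(p*p'*t) := by ring
    rw [h2, Nat.mul_div_cancel_left _ (by norm_num : 0 < 2)]
  have hkZ : (k:ℤ) = (p:ℤ)*p'*t := by exact_mod_cast hkN
  -- bounds
  have hpqZ : (p:ℤ) < q := by exact_mod_cast hpq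
  have hqrZ : (q:ℤ) < r := by exact_mod_cast hqr
  have hp'2Z : (2:ℤ) ≤ p' := by exact_mod_cast hp'2
  have hq7Z : (7:ℤ) ≤ q := by exact_mod_cast hq7
  have hu1Z : (1:ℤ) ≤ u := by exact_mod_cast hu1
  have hs1Z : (1:ℤ) ≤ s := by exact_mod_cast hs1
  have hq1Z : (1:ℤ) ≤ q := by exact_mod_cast hq.one_lt.le
  have hr1Z : (1:ℤ) ≤ r := by exact_mod_cast hr.one_lt.le
  have hqr1 : (1:ℤ)*1 ≤ (q:ℤ)*r := mul_le_mul hq1Z hr1Z (by norm_num) (by linarith)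
  have hqr1' : (1:ℤ) ≤ (q:ℤ)*r := by linarith
  have e1 : (p:ℤ)*((p':ℤ)*t) = (p':ℤ)*((q:ℤ)*r) + p' := by linear_combination (p':ℤ)*hptZ
  have e3 : (p:ℤ)*((q:ℤ)*r) = 2*((p':ℤ)*((q:ℤ)*r)) + (q:ℤ)*r := by
    linear_combination ((q:ℤ)*r)*hpZ
  have e4 : (p':ℤ)*1 ≤ (p':ℤ)*((q:ℤ)*r) := mul_le_mul_of_nonneg_left hqr1' (by linarith)
  have hkltZ : (k:ℤ) < (p:ℤ)*q*r := by linarith [hkZ, e1, e3, e4]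
  have hklt : k < p*q*r := by exact_mod_cast hkltZ
  have e5 : (7:ℤ)*r ≤ (q:ℤ)*r := mul_le_mul_of_nonneg_right hq7Z (by linarith)
  have e6 : (2:ℤ)*((q:ℤ)*r) ≤ (p':ℤ)*((q:ℤ)*r) := mul_le_mul_of_nonneg_right hp'2Z (by linarith)
  have hkgeZ : (p:ℤ) + q + r ≤ k := by linarith [hkZ, e1]
  have hkge : p + q + r ≤ k := by exact_mod_cast hkgeZ
  -- size bounds for the good set
  have hpuZ : (p:ℤ)*1 ≤ (p:ℤ)*u := mul_le_mul_of_nonneg_left hu1Z (by linarith)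
  have hp'uZ : (p:ℤ)*u = 2*((p':ℤ)*u) + u := by linear_combination (u:ℤ)*hpZ
  have hm1 : (1:ℤ)*1 ≤ ((p':ℤ)-1)*u := mul_le_mul (by linarith) hu1Z (by norm_num) (by linarith)
  have hmasterZ : ((p':ℤ)+2)*u + 2 ≤ (q:ℤ) - 1 := by linarith
  have hpq7 : (p:ℤ)*7 ≤ (p:ℤ)*q := mul_le_mul_of_nonneg_left hq7Z (by linarith)
  have h2' : (1:ℤ)*((p:ℤ)*q - 2*p') ≤ (s:ℤ)*((p:ℤ)*q - 2*p') :=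
    mul_le_mul_of_nonneg_right hs1Z (by linarith)
  have hpsZ : (p':ℤ)*s < r := by linarith
  have hpsN : p'*s < r := by exact_mod_cast hpsZ
  have hpuN : p'*u < q := by
    have : (p':ℤ)*u < q := by linarith
    exact_mod_cast this
  -- ============ coefficient decomposition ============
  have hdecomp := cyclCoeff_decomp p q r k hp hq hr (by omega) (by omega) (by omega) hklt hkge
  rw [cyclCoeff, hdecomp]
  -- notation for the weight sum
  have hvcast : ∀ a b c : ℕ, ((q*r*c + p*r*b + p*q*a : ℕ) : ℤ)
      = (a:ℤ)*((p:ℤ)*q) + (b:ℤ)*((p:ℤ)*r) + (c:ℤ)*((q:ℤ)*r) := by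
    intro a b c; push_cast; ring
  have hcopZ : IsCoprime (q:ℤ) (r:ℤ) :=
    Nat.isCoprime_iff_coprime.mpr ((Nat.coprime_primes hq hr).mpr (by omega))
  -- termwise equalities via claims B, C, D
  have hq_eq : Tsum p q r (k - q) = Tsum p q r (k - p - q) := by
    unfold Tsum
    refine Finset.sum_congr rfl fun c hc => Finset.sum_congr rfl fun b hb =>
      Finset.sum_congr rfl fun a ha => ?_
    rw [Finset.mem_range] at hc hb ha
    set v := q*r*c + p*r*b + p*q*a with hvd
    refine if_congr ⟨fun h => ?_, fun h => by omega⟩ rfl rfl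
    by_contra h'
    have hn1 : v + q ≤ k := by omega
    have hn2 : k < v + q + p := by omega
    refine claimB (p:ℤ) q r p' u s t k a b c hpZ hp'2Z huZ hu1Z hsZ hs1Z htZ hkZ hpqZ hqrZ
      (by positivity) (by exact_mod_cast ha) (by positivity) (by exact_mod_cast hb)
      (by positivity) (by exact_mod_cast hc) ?_ ?_
    · rw [hvd] at hn1
      have := (Nat.cast_le (α := ℤ)).mpr hn1
      push_cast at this; linarith
    · rw [hvd] at hn2
      have := (Nat.cast_lt (α := ℤ)).mpr hn2
      push_cast at this; linarith
  have hr_eq : Tsum p q r (k - r) = Tsum p q r (k - p - r) := by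
    unfold Tsum
    refine Finset.sum_congr rfl fun c hc => Finset.sum_congr rfl fun b hb =>
      Finset.sum_congr rfl fun a ha => ?_
    rw [Finset.mem_range] at hc hb ha
    set v := q*r*c + p*r*b + p*q*a with hvd
    refine if_congr ⟨fun h => ?_, fun h => by omega⟩ rfl rfl
    by_contra h'
    have hn1 : v + r ≤ k := by omega
    have hn2 : k < v + r + p := by omega
    refine claimC (p:ℤ) q r p' u s t k a b c v' hpZ hp'2Z huZ hu1Z hsZ hs1Z htZ hkZ
      hvZ (by linarith [hsvZ]) hpqZ hqrZ
      (by positivity) (by exact_mod_cast ha) (by positivity) (by exact_mod_cast hb)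
      (by positivity) (by exact_mod_cast hc) ?_ ?_
    · rw [hvd] at hn1
      have := (Nat.cast_le (α := ℤ)).mpr hn1
      push_cast at this; linarith
    · rw [hvd] at hn2
      have := (Nat.cast_lt (α := ℤ)).mpr hn2
      push_cast at this; linarith
  have hqr_eq : Tsum p q r (k - q - r) = Tsum p q r (k - p - q - r) := by
    unfold Tsum
    refine Finset.sum_congr rfl fun c hc => Finset.sum_congr rfl fun b hb =>
      Finset.sum_congr rfl fun a ha => ?_
    rw [Finset.mem_range] at hc hb ha
    set v := q*r*c + p*r*b + p*q*a with hvd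
    refine if_congr ⟨fun h => ?_, fun h => by omega⟩ rfl rfl
    by_contra h'
    have hn1 : v + q + r ≤ k := by omega
    have hn2 : k < v + q + r + p := by omega
    refine claimD (p:ℤ) q r p' u s t k a b c v' hpZ hp'2Z huZ hu1Z hsZ hs1Z htZ hkZ
      hvZ (by linarith [hsvZ]) hpqZ hqrZ
      (by positivity) (by exact_mod_cast ha) (by positivity) (by exact_mod_cast hb)
      (by positivity) (by exact_mod_cast hc) ?_ ?_
    · rw [hvd] at hn1
      have := (Nat.cast_le (α := ℤ)).mpr hn1
      push_cast at this; linarith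
    · rw [hvd] at hn2
      have := (Nat.cast_lt (α := ℤ)).mpr hn2
      push_cast at this; linarith
  -- main window count via claim A
  have hmain : Tsum p q r k - Tsum p q r (k - p) = (p':ℤ) + 1 := by
    unfold Tsum
    simp only [← Finset.sum_sub_distrib]
    have hpoint : ∀ c ∈ Finset.range p, ∀ b ∈ Finset.range q, ∀ a ∈ Finset.range r,
        ((if q*r*c + p*r*b + p*q*a ≤ k then (1:ℤ) else 0)
          - (if q*r*c + p*r*b + p*q*a ≤ k - p then (1:ℤ) else 0))
        = (if c ≤ p' ∧ a = (p'-c)*s ∧ b = (p'-c)*u then (1:ℤ) else 0) := by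
      intro c hc b hb a ha
      rw [Finset.mem_range] at hc hb ha
      set v := q*r*c + p*r*b + p*q*a with hvd
      by_cases hgood : c ≤ p' ∧ a = (p'-c)*s ∧ b = (p'-c)*u
      · rw [if_pos hgood]
        obtain ⟨hg1, hg2, hg3⟩ := hgood
        have hcsub : ((p' - c : ℕ) : ℤ) = (p':ℤ) - c := by
          have := Nat.cast_sub (R := ℤ) hg1
          push_cast at this ⊢
          linarith
        have haZ : (a:ℤ) = ((p':ℤ) - c)*s := by
          rw [← hcsub]
          exact_mod_cast congrArg (Nat.cast : ℕ → ℤ) hg2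
        have hbZ : (b:ℤ) = ((p':ℤ) - c)*u := by
          rw [← hcsub]
          exact_mod_cast congrArg (Nat.cast : ℕ → ℤ) hg3
        have hvkZ : ((v:ℕ):ℤ) + c = k := by
          rw [hvd, hvcast a b c]
          linear_combination ((p:ℤ)*q)*haZ + ((p:ℤ)*r)*hbZ - hkZ - (c:ℤ)*hptZ
            - (p:ℤ)*((p':ℤ)-(c:ℤ))*htZ
        have hvk : v + c = k := by exact_mod_cast hvkZ
        rw [if_pos (by omega), if_neg (by omega)]
        norm_num
      · rw [if_neg hgood]
        have hpair : (v ≤ k) ↔ (v ≤ k - p) := by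
          constructor
          · intro h
            by_contra h'
            have hn1 : v ≤ k := h
            have hn2 : k < v + p := by omega
            have hc' := claimA (p:ℤ) q r p' u s t k a b c hpZ hp'2Z huZ hu1Z hsZ hs1Z htZ hkZ
              hpqZ hqrZ hcopZ
              (by positivity) (by exact_mod_cast ha) (by positivity) (by exact_mod_cast hb)
              (by positivity) (by exact_mod_cast hc)
              (by rw [hvd] at hn1
                  have := (Nat.cast_le (α := ℤ)).mpr hn1
                  push_cast at this; linarith)
              (by rw [hvd] at hn2
                  have := (Nat.cast_lt (α := ℤ)).mpr hn2
                  push_cast at this; linarith)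
            obtain ⟨hc1, hc2, hc3⟩ := hc'
            have hg1 : c ≤ p' := by exact_mod_cast hc1
            have hcsub : ((p' - c : ℕ) : ℤ) = (p':ℤ) - c := by
              have := Nat.cast_sub (R := ℤ) hg1
              push_cast at this ⊢
              linarith
            have hg2 : a = (p'-c)*s := by
              have : (a:ℤ) = ((p'-c : ℕ):ℤ)*s := by rw [hcsub]; exact hc2
              exact_mod_cast this
            have hg3 : b = (p'-c)*u := by
              have : (b:ℤ) = ((p'-c : ℕ):ℤ)*u := by rw [hcsub]; exact hc3
              exact_mod_cast this
            exact hgood ⟨hg1, hg2, hg3⟩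
          · intro h; omega
        by_cases h : v ≤ k
        · rw [if_pos h, if_pos (hpair.mp h)]; ring
        · rw [if_neg h, if_neg (fun hh => h (hpair.mpr hh))]; ring
    rw [Finset.sum_congr rfl fun c hc => Finset.sum_congr rfl fun b hb =>
      Finset.sum_congr rfl fun a ha => hpoint c hc b hb a ha]
    -- now count the good triples
    have hcount : ∀ c ∈ Finset.range p,
        (∑ b ∈ Finset.range q, ∑ a ∈ Finset.range r,
          if c ≤ p' ∧ a = (p'-c)*s ∧ b = (p'-c)*u then (1:ℤ) else 0)
        = (if c ≤ p' then (1:ℤ) else 0) := by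
      intro c hc
      by_cases hc' : c ≤ p'
      · rw [if_pos hc']
        have hstep : ∀ b ∈ Finset.range q,
            (∑ a ∈ Finset.range r, if c ≤ p' ∧ a = (p'-c)*s ∧ b = (p'-c)*u then (1:ℤ) else 0)
            = (if b = (p'-c)*u then (1:ℤ) else 0) := by
          intro b _
          have h1 : ∀ a, (if c ≤ p' ∧ a = (p'-c)*s ∧ b = (p'-c)*u then (1:ℤ) else 0)
              = (if a = (p'-c)*s then (if b = (p'-c)*u then (1:ℤ) else 0) else 0) := by
            intro a
            by_cases h₁ : a = (p'-c)*s <;> by_cases h₂ : b = (p'-c)*u <;>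
              simp [h₁, h₂, hc']
          rw [Finset.sum_congr rfl fun a _ => h1 a, Finset.sum_ite_eq' (Finset.range r)]
          rw [if_pos (Finset.mem_range.mpr (lt_of_le_of_lt
            (Nat.mul_le_mul_right s (by omega)) hpsN))]
        rw [Finset.sum_congr rfl hstep, Finset.sum_ite_eq' (Finset.range q)]
        rw [if_pos (Finset.mem_range.mpr (lt_of_le_of_lt
          (Nat.mul_le_mul_right u (by omega)) hpuN))]
      · rw [if_neg hc']
        refine Finset.sum_eq_zero fun b _ => Finset.sum_eq_zero fun a _ => ?_
        rw [if_neg (by tauto)]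
    rw [Finset.sum_congr rfl hcount]
    have hfilter : (Finset.range p).filter (fun c => c ≤ p') = Finset.range (p'+1) := by
      ext x
      simp only [Finset.mem_filter, Finset.mem_range]
      omega
    rw [← Finset.sum_filter, hfilter, Finset.sum_const, Finset.card_range]
    simp
  -- ============ final computation ============
  have hdiv : ((p:ℤ) + 1)/2 = (p':ℤ) + 1 := by rw [hpZ]; omega
  rw [hdiv]
  linarith [hq_eq, hr_eq, hqr_eq, hmain]
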